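/- Assume ε·λ_max(L_s + D_ω) < 2 and ε·K·(ρ^max + d_ω^max) < 1. Let U_0 ∈ Σ and let S ∈ Σ̄ be a binary matrix satisfying ⟨∇E(U_0), S⟩ ≤ ⟨∇E(U_0), Z⟩ for all Z ∈ Σ (such a binary minimizer exists). Then: (a) E(S) ≤ E(U_0), with strict inequality E(S) < E(U_0) if S ≠ U_0; and (b) S is a stationary point of the problem of minimizing E over Σ, i.e., ⟨∇E(S), Z − S⟩ ≥ 0 for all Z ∈ Σ. In particular, one step of the Frank–Wolfe method from U_0 reaches a stationary point (one-shot convergence). -/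

import Mathlib

open Matrix

noncomputable section

/-- The unit simplex `Δ` in `ℝ^K`. -/
def unitSimplex (K : ℕ) : Set (Fin K → ℝ) :=
  {y | (∀ j, 0 ≤ y j) ∧ ∑ j, y j = 1}

/-- `Σ`: matrices in `ℝ^{n×K}` each of whose rows lies in the unit simplex. -/
def SigmaSet (n K : ℕ) : Set (Matrix (Fin n) (Fin K) ℝ) :=
  {U | ∀ i, U i ∈ unitSimplex K}

/-- `Σ̄`: binary matrices in `Σ`. -/
def SigmaBar (n K : ℕ) : Set (Matrix (Fin n) (Fin K) ℝ) :=
  {U | U ∈ SigmaSet n K ∧ ∀ i j, U i j = 0 ∨ U i j = 1}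

/-- Frobenius inner product `⟨A,B⟩ = trace(AᵀB)`. -/
def frobInner {n K : ℕ} (A B : Matrix (Fin n) (Fin K) ℝ) : ℝ :=
  Matrix.trace (Aᵀ * B)

/-- Frobenius norm. -/
def frobNorm {n K : ℕ} (A : Matrix (Fin n) (Fin K) ℝ) : ℝ :=
  Real.sqrt (∑ i, ∑ j, (A i j) ^ 2)

/-- The energy
`E(U) = (1/2)·trace(Uᵀ Lₛ U) + (1/ε)·Σᵢ uᵢᵀ(𝟙 − uᵢ) + (1/2)·Σᵢ ωᵢ‖ûᵢ − uᵢ‖²`. -/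
def En {n K : ℕ} (Ls : Matrix (Fin n) (Fin n) ℝ) (ω : Fin n → ℝ)
    (Uhat : Matrix (Fin n) (Fin K) ℝ) (ε : ℝ) (U : Matrix (Fin n) (Fin K) ℝ) : ℝ :=
  (1 / 2) * Matrix.trace (Uᵀ * Ls * U)
    + (1 / ε) * ∑ i, ∑ j, U i j * (1 - U i j)
    + (1 / 2) * ∑ i, ω i * ∑ j, (Uhat i j - U i j) ^ 2

/-- The gradient `∇E(U) = Lₛ U + (1/ε)(J − 2U) − D_ω(Û − U)` (`J` the all-ones matrix). -/
def gradE {n K : ℕ} (Ls : Matrix (Fin n) (Fin n) ℝ) (ω : Fin n → ℝ)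
    (Uhat : Matrix (Fin n) (Fin K) ℝ) (ε : ℝ) (U : Matrix (Fin n) (Fin K) ℝ) :
    Matrix (Fin n) (Fin K) ℝ :=
  Ls * U + (1 / ε) • (Matrix.of (fun _ _ => (1 : ℝ)) - 2 • U)
    - Matrix.diagonal ω * (Uhat - U)


lemma trace_frob {n K : ℕ} (A B : Matrix (Fin n) (Fin K) ℝ) :
    Matrix.trace (Aᵀ * B) = ∑ i, ∑ j, A i j * B i j := by
  simp only [Matrix.trace, Matrix.diag, Matrix.mul_apply, Matrix.transpose_apply]
  rw [Finset.sum_comm]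

lemma trace_diag_quad {n K : ℕ} (d : Fin n → ℝ) (M : Matrix (Fin n) (Fin K) ℝ) :
    Matrix.trace (Mᵀ * Matrix.diagonal d * M) = ∑ i, d i * ∑ j, (M i j)^2 := by
  simp only [Matrix.trace, Matrix.diag, Matrix.mul_apply, Matrix.transpose_apply,
    Matrix.diagonal_apply]
  rw [Finset.sum_comm]
  congr 1; ext i
  rw [Finset.mul_sum]
  congr 1; ext k
  rw [Finset.sum_eq_single i]
  · simp; ring
  · intro b _ hb; simp [hb]
  · simp

lemma trace_sym {n K : ℕ} {A : Matrix (Fin n) (Fin n) ℝ} (hA : Aᵀ = A)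
    (X Y : Matrix (Fin n) (Fin K) ℝ) :
    Matrix.trace (Xᵀ * A * Y) = Matrix.trace (Yᵀ * A * X) := by
  rw [← Matrix.trace_transpose (Xᵀ * A * Y)]
  simp [Matrix.transpose_mul, hA, Matrix.mul_assoc]

lemma trace_comm' {n K : ℕ} (X Y : Matrix (Fin n) (Fin K) ℝ) :
    Matrix.trace (Xᵀ * Y) = Matrix.trace (Yᵀ * X) := by
  rw [← Matrix.trace_transpose (Xᵀ * Y)]
  simp [Matrix.transpose_mul]

lemma trace_quad_le {n K : ℕ} (H : Matrix (Fin n) (Fin n) ℝ) (hH : H.IsHermitian)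
    (lam : ℝ) (hlam : ∀ i, hH.eigenvalues i ≤ lam) (V : Matrix (Fin n) (Fin K) ℝ) :
    Matrix.trace (Vᵀ * H * V) ≤ lam * Matrix.trace (Vᵀ * V) := by
  set U : Matrix (Fin n) (Fin n) ℝ := (hH.eigenvectorUnitary : Matrix (Fin n) (Fin n) ℝ) with hUdef
  set W : Matrix (Fin n) (Fin K) ℝ := Uᵀ * V with hWdef
  have hstar : star U = Uᵀ := by
    rw [Matrix.star_eq_conjTranspose, Matrix.conjTranspose_eq_transpose_of_trivial]
  have hU : U * Uᵀ = 1 := by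
    have := Matrix.mem_unitaryGroup_iff.mp hH.eigenvectorUnitary.2
    rwa [hstar] at this
  have h1 : Vᵀ * H * V = Wᵀ * Matrix.diagonal hH.eigenvalues * W := by
    have hspec := hH.spectral_theorem
    rw [Unitary.conjStarAlgAut_apply, ← hUdef, hstar] at hspec
    have hcoe : Matrix.diagonal (RCLike.ofReal ∘ hH.eigenvalues) = Matrix.diagonal hH.eigenvalues := rfl
    rw [hcoe] at hspec
    have : Vᵀ * H * V = Vᵀ * (U * Matrix.diagonal hH.eigenvalues * Uᵀ) * V := by
      rw [← hspec]
    rw [this, hWdef]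
    simp only [Matrix.transpose_mul, Matrix.transpose_transpose, Matrix.mul_assoc]
  have h2 : Vᵀ * V = Wᵀ * W := by
    rw [hWdef]
    simp only [Matrix.transpose_mul, Matrix.transpose_transpose]
    rw [Matrix.mul_assoc, ← Matrix.mul_assoc U, hU, Matrix.one_mul]
  rw [h1, h2, trace_diag_quad, trace_frob, Finset.mul_sum]
  apply Finset.sum_le_sum
  intro i _
  rw [Finset.mul_sum, Finset.mul_sum]
  apply Finset.sum_le_sum
  intro j _
  have h3 : (W i j) * (W i j) = (W i j)^2 := by ring
  rw [h3]
  nlinarith [hlam i, sq_nonneg (W i j)]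

lemma En_trace {n K : ℕ} (Ls : Matrix (Fin n) (Fin n) ℝ) (ω : Fin n → ℝ)
    (Uhat : Matrix (Fin n) (Fin K) ℝ) (ε : ℝ) (U : Matrix (Fin n) (Fin K) ℝ) :
    En Ls ω Uhat ε U = (1 / 2) * Matrix.trace (Uᵀ * Ls * U)
      + (1 / ε) * (Matrix.trace ((Matrix.of (fun _ _ => (1:ℝ)) : Matrix (Fin n) (Fin K) ℝ)ᵀ * U)
          - Matrix.trace (Uᵀ * U))
      + (1 / 2) * Matrix.trace ((Uhat - U)ᵀ * Matrix.diagonal ω * (Uhat - U)) := by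
  unfold En
  rw [trace_frob, trace_frob, trace_diag_quad]
  have h : ∀ i : Fin n, ∑ j, U i j * (1 - U i j) = (∑ j, U i j) - ∑ j, U i j * U i j := by
    intro i; rw [← Finset.sum_sub_distrib]; exact Finset.sum_congr rfl fun j _ => by ring
  simp only [h, Matrix.of_apply, one_mul, Finset.sum_sub_distrib, Matrix.sub_apply, pow_two]

lemma En_expand {n K : ℕ} (Ls : Matrix (Fin n) (Fin n) ℝ) (hsym : Lsᵀ = Ls)
    (ω : Fin n → ℝ) (Uhat : Matrix (Fin n) (Fin K) ℝ) (ε : ℝ)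
    (U V : Matrix (Fin n) (Fin K) ℝ) :
    En Ls ω Uhat ε (U + V) = En Ls ω Uhat ε U + frobInner (gradE Ls ω Uhat ε U) V
      + (1 / 2) * Matrix.trace (Vᵀ * (Ls + Matrix.diagonal ω) * V)
      - (1 / ε) * Matrix.trace (Vᵀ * V) := by
  have hdiag : (Matrix.diagonal ω)ᵀ = Matrix.diagonal ω := Matrix.diagonal_transpose ω
  rw [En_trace, En_trace, frobInner]
  unfold gradE
  have hsub : Uhat - (U + V) = (Uhat - U) - V := by abel
  rw [hsub]
  simp only [Matrix.transpose_add, Matrix.transpose_sub, Matrix.transpose_smul,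
    Matrix.transpose_mul, Matrix.add_mul, Matrix.mul_add, Matrix.sub_mul, Matrix.mul_sub,
    Matrix.smul_mul, Matrix.trace_add, Matrix.trace_sub, Matrix.trace_smul, smul_eq_mul,
    Matrix.transpose_transpose, hsym, hdiag, Matrix.mul_assoc, two_smul]
  have e1 := trace_sym hsym U V
  have e2a := trace_sym hdiag Uhat V
  have e2b := trace_sym hdiag U V
  have e3 := trace_comm' U V
  simp only [Matrix.mul_assoc] at e1 e2a e2b e3
  linear_combination (-(1:ℝ)/2) * e1 + (1/ε) * e3 + (1/2) * e2a - (1/2) * e2b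


/-- one-shot convergence of Frank–Wolfe: under `ε·λ_max(Lₛ + D_ω) < 2` and
`ε·K·(ρ^max + d_ω^max) < 1`, a binary LMO output `S` from `U₀` exists, decreases `E`
(strictly if `S ≠ U₀`), and is a stationary point of the minimization of `E` over `Σ`. -/
theorem one_shot_frank_wolfe (n K : ℕ) (hn : 1 ≤ n) (hK : 2 ≤ K)
    (Ls : Matrix (Fin n) (Fin n) ℝ) (hLs : Ls.PosSemidef)
    (ω : Fin n → ℝ) (hω : ∀ i, 0 ≤ ω i)
    (Uhat : Matrix (Fin n) (Fin K) ℝ) (hUhat : Uhat ∈ SigmaSet n K)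
    (ε : ℝ) (hε : 0 < ε)
    (hH : (Ls + Matrix.diagonal ω).IsHermitian)
    (lam : ℝ) (hlam : IsGreatest (Set.range hH.eigenvalues) lam)
    (h1 : ε * lam < 2)
    (ρmax : ℝ) (hρ : IsGreatest (Set.range fun i => ∑ j, |Ls i j|) ρmax)
    (dmax : ℝ) (hd : IsGreatest (Set.range ω) dmax)
    (h2 : ε * K * (ρmax + dmax) < 1)
    (U0 : Matrix (Fin n) (Fin K) ℝ) (hU0 : U0 ∈ SigmaSet n K)
    (S : Matrix (Fin n) (Fin K) ℝ) (hSbar : S ∈ SigmaBar n K)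
    (hSmin : ∀ Z ∈ SigmaSet n K,
      frobInner (gradE Ls ω Uhat ε U0) S ≤ frobInner (gradE Ls ω Uhat ε U0) Z) :
    (∃ S' ∈ SigmaBar n K, ∀ Z ∈ SigmaSet n K,
      frobInner (gradE Ls ω Uhat ε U0) S' ≤ frobInner (gradE Ls ω Uhat ε U0) Z) ∧
    En Ls ω Uhat ε S ≤ En Ls ω Uhat ε U0 ∧
    (S ≠ U0 → En Ls ω Uhat ε S < En Ls ω Uhat ε U0) ∧
    (∀ Z ∈ SigmaSet n K, 0 ≤ frobInner (gradE Ls ω Uhat ε S) (Z - S)) := by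
  obtain ⟨hS, hbin⟩ := hSbar
  have hsym : Lsᵀ = Ls := by
    have := hLs.1
    rwa [Matrix.IsHermitian, Matrix.conjTranspose_eq_transpose_of_trivial] at this
  have hmem01 : ∀ (M : Matrix (Fin n) (Fin K) ℝ), M ∈ SigmaSet n K →
      ∀ i j, 0 ≤ M i j ∧ M i j ≤ 1 := by
    intro M hM i j
    obtain ⟨hpos, hsum⟩ := hM i
    refine ⟨hpos j, ?_⟩
    calc M i j ≤ ∑ j', M i j' :=
          Finset.single_le_sum (fun j' _ => hpos j') (Finset.mem_univ j)
    _ = 1 := hsum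
  have hρ0 : 0 ≤ ρmax := by
    obtain ⟨i0, hi0⟩ := hρ.1
    rw [← hi0]; positivity
  have hd0 : 0 ≤ dmax := by
    obtain ⟨i0, hi0⟩ := hd.1
    rw [← hi0]; exact hω i0
  have hrow : ∀ i, ∃ j0, S i j0 = 1 ∧ ∀ j, j ≠ j0 → S i j = 0 := by
    intro i
    obtain ⟨hpos, hsum⟩ := hS i
    have hex : ∃ j0, S i j0 = 1 := by
      by_contra hc
      push_neg at hc
      have hz : ∀ j, S i j = 0 := fun j => (hbin i j).resolve_right (hc j)
      rw [Finset.sum_congr rfl (fun j _ => hz j)] at hsum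
      simp at hsum
    obtain ⟨j0, hj0⟩ := hex
    refine ⟨j0, hj0, fun j hj => ?_⟩
    rcases hbin i j with h | h
    · exact h
    · exfalso
      have h2' : (2:ℝ) ≤ ∑ j', S i j' := by
        have hsub : ({j0, j} : Finset (Fin K)) ⊆ Finset.univ := Finset.subset_univ _
        have hle := Finset.sum_le_sum_of_subset_of_nonneg hsub (fun k _ _ => hpos k)
        rw [Finset.sum_pair (Ne.symm hj)] at hle
        rw [hj0, h] at hle; linarith
      rw [hsum] at h2'; linarith
  choose jstar hjstar1 hjstar0 using hrow
  set g := gradE Ls ω Uhat ε S with hg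
  have hgentry : ∀ i j, g i j = (∑ k, Ls i k * S k j) + (1/ε) * (1 - 2 * S i j)
      - ω i * (Uhat i j - S i j) := by
    intro i j
    simp [hg, gradE, Matrix.mul_apply, Matrix.add_apply, Matrix.sub_apply, Matrix.smul_apply,
      Matrix.diagonal_mul, Matrix.of_apply, smul_eq_mul]
    rw [Finset.sum_eq_single i]
    · simp [Matrix.diagonal_apply]
    · intro b _ hb; simp [Matrix.diagonal_apply, Ne.symm hb]
    · simp
  have hA : ∀ i j, |∑ k, Ls i k * S k j| ≤ ρmax := by
    intro i j
    calc |∑ k, Ls i k * S k j| ≤ ∑ k, |Ls i k * S k j| := Finset.abs_sum_le_sum_abs _ _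
    _ ≤ ∑ k, |Ls i k| := by
        apply Finset.sum_le_sum
        intro k _
        rw [abs_mul]
        have hk := hmem01 S hS k j
        have habs : |S k j| ≤ 1 := by rw [abs_of_nonneg hk.1]; exact hk.2
        nlinarith [abs_nonneg (Ls i k)]
    _ ≤ ρmax := hρ.2 ⟨i, rfl⟩
  have hεpos : 0 < 1/ε := by positivity
  have hεinv : 2 * (ρmax + dmax) < 1/ε := by
    have hK2 : (2:ℝ) ≤ (K:ℝ) := by exact_mod_cast hK
    have hle := mul_le_mul_of_nonneg_right
      (mul_le_mul_of_nonneg_left hK2 hε.le) (by linarith : (0:ℝ) ≤ ρmax + dmax)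
    rw [lt_div_iff₀ hε]
    nlinarith
  have hgmin : ∀ i j, g i (jstar i) ≤ g i j := by
    intro i j
    rcases eq_or_ne j (jstar i) with rfl | hj
    · exact le_rfl
    · have hS0 : S i j = 0 := hjstar0 i j hj
      have hS1 : S i (jstar i) = 1 := hjstar1 i
      rw [hgentry, hgentry, hS0, hS1]
      have ha1 := abs_le.mp (hA i j)
      have ha2 := abs_le.mp (hA i (jstar i))
      have hU1 := hmem01 Uhat hUhat i j
      have hU2 := hmem01 Uhat hUhat i (jstar i)
      have hωi := hω i
      have hωd : ω i ≤ dmax := hd.2 ⟨i, rfl⟩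
      have hmul1 : ω i * Uhat i j ≤ ω i := mul_le_of_le_one_right hωi hU1.2
      have hmul2 : 0 ≤ ω i * Uhat i (jstar i) := mul_nonneg hωi hU2.1
      nlinarith [ha1.1, ha1.2, ha2.1, ha2.2]
  have hstat : ∀ Z ∈ SigmaSet n K, 0 ≤ frobInner g (Z - S) := by
    intro Z hZ
    rw [frobInner, trace_frob]
    apply Finset.sum_nonneg
    intro i _
    have hsum : ∑ j, g i j * (Z - S) i j = (∑ j, g i j * Z i j) - ∑ j, g i j * S i j := by
      rw [← Finset.sum_sub_distrib]
      exact Finset.sum_congr rfl fun j _ => by simp [Matrix.sub_apply]; ring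
    rw [hsum]
    have h1' : ∑ j, g i j * S i j = g i (jstar i) := by
      rw [Finset.sum_eq_single (jstar i)]
      · rw [hjstar1 i]; ring
      · intro b _ hb; rw [hjstar0 i b hb]; ring
      · simp
    have h2' : g i (jstar i) ≤ ∑ j, g i j * Z i j := by
      obtain ⟨hpos, hsumZ⟩ := hZ i
      calc g i (jstar i) = ∑ j, g i (jstar i) * Z i j := by
            rw [← Finset.mul_sum, hsumZ, mul_one]
      _ ≤ ∑ j, g i j * Z i j :=
            Finset.sum_le_sum fun j _ => mul_le_mul_of_nonneg_right (hgmin i j) (hpos j)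
    rw [h1']; linarith
  set g0 := gradE Ls ω Uhat ε U0 with hg0
  have hlin : frobInner g0 (S - U0) = frobInner g0 S - frobInner g0 U0 := by
    simp [frobInner, Matrix.mul_sub]
  have hfw : frobInner g0 (S - U0) ≤ 0 := by
    rw [hlin]
    have := hSmin U0 hU0
    linarith
  set V := S - U0 with hV
  have hexp := En_expand Ls hsym ω Uhat ε U0 V
  have hUV : U0 + V = S := by rw [hV]; abel
  rw [hUV] at hexp
  have hlami : ∀ i, hH.eigenvalues i ≤ lam := fun i => hlam.2 ⟨i, rfl⟩
  have hquad := trace_quad_le _ hH lam hlami V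
  have htrnn : 0 ≤ Matrix.trace (Vᵀ * V) := by
    rw [trace_frob]
    exact Finset.sum_nonneg fun i _ => Finset.sum_nonneg fun j _ => mul_self_nonneg _
  have hco : lam / 2 - 1/ε < 0 := by
    have hlt : lam < 2/ε := by rw [lt_div_iff₀ hε]; linarith
    have h4 : (2/ε)/2 = 1/ε := by ring
    linarith
  have hkey : (1/2) * Matrix.trace (Vᵀ * (Ls + Matrix.diagonal ω) * V)
      - (1/ε) * Matrix.trace (Vᵀ * V) ≤ (lam/2 - 1/ε) * Matrix.trace (Vᵀ * V) := by
    nlinarith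
  refine ⟨⟨S, ⟨hS, hbin⟩, hSmin⟩, ?_, ?_, hstat⟩
  · have hprod : (lam/2 - 1/ε) * Matrix.trace (Vᵀ * V) ≤ 0 :=
      mul_nonpos_of_nonpos_of_nonneg (le_of_lt hco) htrnn
    linarith
  · intro hne
    have hV0 : V ≠ 0 := sub_ne_zero.mpr hne
    have htrpos : 0 < Matrix.trace (Vᵀ * V) := by
      rw [trace_frob]
      obtain ⟨i0, j0, hij⟩ : ∃ i j, V i j ≠ 0 := by
        by_contra hc
        push_neg at hc
        exact hV0 (by ext i j; simpa using hc i j)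
      have hin : 0 < ∑ j, V i0 j * V i0 j :=
        Finset.sum_pos' (fun j _ => mul_self_nonneg _)
          ⟨j0, Finset.mem_univ j0, mul_self_pos.mpr hij⟩
      have hout := Finset.single_le_sum (f := fun i => ∑ j, V i j * V i j)
        (fun i _ => Finset.sum_nonneg fun j _ => mul_self_nonneg _) (Finset.mem_univ i0)
      linarith
    have hprod : (lam/2 - 1/ε) * Matrix.trace (Vᵀ * V) < 0 :=
      mul_neg_of_neg_of_pos hco htrpos
    linarith
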